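/- Let r > 0, let a be a finite signed measure on [-r, 0], and let θ ∈ ℝ. Then for every c ∈ ℝ, the set {λ ∈ ℂ : h_θ(λ) = 0 and Re(λ) ≥ c} is finite, where h_θ(λ) = λ - θ ∫_{[-r,0]} e^{λu} a(du). -/

import Mathlib

open MeasureTheory Set Filter

/-- Integral of a complex-valued function on a set against a finite signed measure,
defined via the Jordan decomposition. -/
noncomputable def cInt (a : SignedMeasure ℝ) (s : Set ℝ) (f : ℝ → ℂ) : ℂ :=
  (∫ x in s, f x ∂a.toJordanDecomposition.posPart) -
  (∫ x in s, f x ∂a.toJordanDecomposition.negPart)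

/-- The characteristic function `h_θ(z) = z - θ ∫_{[-r,0]} e^{zu} a(du)`. -/
noncomputable def hChar (r θ : ℝ) (a : SignedMeasure ℝ) (z : ℂ) : ℂ :=
  z - (θ : ℂ) * cInt a (Icc (-r) 0) (fun u => Complex.exp (z * (u : ℂ)))

lemma expIntAux_diff (r : ℝ) (μ : Measure ℝ) [IsFiniteMeasure μ] :
    Differentiable ℂ (fun z : ℂ => ∫ x in Icc (-r) 0, Complex.exp (z * (x : ℂ)) ∂μ) := by
  intro z₀
  have key := hasDerivAt_integral_of_dominated_loc_of_deriv_le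
    (μ := μ.restrict (Icc (-r) 0))
    (F := fun (z : ℂ) (x : ℝ) => Complex.exp (z * (x : ℂ)))
    (F' := fun (z : ℂ) (x : ℝ) => Complex.exp (z * (x : ℂ)) * (x : ℂ))
    (x₀ := z₀) (bound := fun _ => r * Real.exp ((‖z₀‖ + 1) * r)) (Metric.ball_mem_nhds z₀ one_pos)
    ?_ ?_ ?_ ?_ ?_ ?_
  · exact key.2.differentiableAt
  · filter_upwards with z
    exact (Complex.continuous_exp.comp (continuous_const.mul Complex.continuous_ofReal))
      |>.aestronglyMeasurable
  · apply Integrable.mono' (g := fun _ : ℝ => Real.exp (‖z₀‖ * r)) (integrable_const _)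
    · exact (Complex.continuous_exp.comp (continuous_const.mul Complex.continuous_ofReal))
        |>.aestronglyMeasurable
    · filter_upwards [ae_restrict_mem measurableSet_Icc] with x hx
      rw [Complex.norm_exp]
      apply Real.exp_le_exp.2
      have h1 : (z₀ * (x : ℂ)).re = z₀.re * x := by simp [Complex.mul_re]
      rw [h1]
      calc z₀.re * x ≤ |z₀.re| * |x| := le_abs_self _ |>.trans (abs_mul _ _).le
        _ ≤ ‖z₀‖ * r := by
            apply mul_le_mul (Complex.abs_re_le_norm z₀) ?_ (abs_nonneg x) (norm_nonneg z₀)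
            rw [abs_le]
            have h2 := hx.1; have h3 := hx.2
            constructor <;> linarith
  · exact ((Complex.continuous_exp.comp (continuous_const.mul Complex.continuous_ofReal)).mul
      Complex.continuous_ofReal).aestronglyMeasurable
  · filter_upwards [ae_restrict_mem measurableSet_Icc] with x hx z hz
    have hxr : |x| ≤ r := by
      have h0 : -r ≤ 0 := le_trans hx.1 hx.2
      rw [abs_le]; constructor <;> linarith [hx.1, hx.2]
    have hrnn : (0:ℝ) ≤ r := le_trans (abs_nonneg x) hxr
    rw [norm_mul, Complex.norm_exp, Complex.norm_real, Real.norm_eq_abs]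
    have h1 : (z * (x : ℂ)).re = z.re * x := by simp [Complex.mul_re]
    rw [h1, mul_comm (r : ℝ)]
    apply mul_le_mul ?_ hxr (abs_nonneg x) (Real.exp_nonneg _)
    apply Real.exp_le_exp.2
    have hz' : ‖z‖ ≤ ‖z₀‖ + 1 := by
      have := mem_ball_iff_norm.1 hz
      calc ‖z‖ = ‖z₀ + (z - z₀)‖ := by ring_nf
        _ ≤ ‖z₀‖ + ‖z - z₀‖ := norm_add_le _ _
        _ ≤ ‖z₀‖ + 1 := by linarith
    calc z.re * x ≤ |z.re| * |x| := le_abs_self _ |>.trans (abs_mul _ _).le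
      _ ≤ (‖z₀‖ + 1) * r := by
          apply mul_le_mul ((Complex.abs_re_le_norm z).trans hz') hxr (abs_nonneg x)
          positivity
  · exact integrable_const _
  · filter_upwards with x z _
    simpa [mul_comm] using ((hasDerivAt_id z).mul_const (x : ℂ)).cexp

lemma expIntAux_bound {r c : ℝ} (hr : 0 < r) (μ : Measure ℝ) [IsFiniteMeasure μ]
    {z : ℂ} (hz : c ≤ z.re) :
    ‖∫ x in Icc (-r) 0, Complex.exp (z * (x : ℂ)) ∂μ‖
      ≤ Real.exp (|c| * r) * (μ univ).toReal := by
  have hb : ∀ x ∈ Icc (-r) 0, ‖Complex.exp (z * (x : ℂ))‖ ≤ Real.exp (|c| * r) := by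
    intro x hx
    rw [Complex.norm_exp]
    apply Real.exp_le_exp.2
    have h1 : (z * (x : ℂ)).re = z.re * x := by simp [Complex.mul_re]
    rw [h1]
    have hx0 : x ≤ 0 := hx.2
    have hxr : -r ≤ x := hx.1
    calc z.re * x ≤ c * x := by nlinarith
      _ ≤ |c| * |x| := (le_abs_self _).trans (abs_mul _ _).le
      _ ≤ |c| * r := by
          apply mul_le_mul_of_nonneg_left ?_ (abs_nonneg c)
          rw [abs_le]; constructor <;> linarith
  calc ‖∫ x in Icc (-r) 0, Complex.exp (z * (x : ℂ)) ∂μ‖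
      ≤ Real.exp (|c| * r) * (μ (Icc (-r) 0)).toReal :=
        norm_setIntegral_le_of_norm_le_const (measure_lt_top _ _) hb
    _ ≤ Real.exp (|c| * r) * (μ univ).toReal := by
        apply mul_le_mul_of_nonneg_left ?_ (Real.exp_nonneg _)
        exact ENNReal.toReal_mono (measure_ne_top _ _) (measure_mono (subset_univ _))

/-- For every `c ∈ ℝ`, the set of zeros of the characteristic function with real part
at least `c` is finite. -/
theorem characteristic_zeros_re_ge_finite (r : ℝ) (hr : 0 < r) (a : SignedMeasure ℝ)
    (ha : a.totalVariation (Icc (-r) 0)ᶜ = 0) (θ : ℝ) (c : ℝ) :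
    {l : ℂ | hChar r θ a l = 0 ∧ c ≤ l.re}.Finite := by
  set μp := a.toJordanDecomposition.posPart with hμp
  set μn := a.toJordanDecomposition.negPart with hμn
  set Mp := (μp univ).toReal
  set Mn := (μn univ).toReal
  have hMp : 0 ≤ Mp := ENNReal.toReal_nonneg
  have hMn : 0 ≤ Mn := ENNReal.toReal_nonneg
  -- the characteristic function is entire
  have hdiff : Differentiable ℂ (hChar r θ a) := by
    have h1 := expIntAux_diff r μp
    have h2 := expIntAux_diff r μn
    exact differentiable_id.sub ((differentiable_const _).mul (h1.sub h2))
  have hanal : AnalyticOnNhd ℂ (hChar r θ a) univ :=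
    hdiff.differentiableOn.analyticOnNhd isOpen_univ
  -- uniform bound for cInt for Re z ≥ c'
  have hcInt_bound : ∀ (c' : ℝ) (z : ℂ), c' ≤ z.re →
      ‖cInt a (Icc (-r) 0) (fun u => Complex.exp (z * (u : ℂ)))‖
        ≤ Real.exp (|c'| * r) * (Mp + Mn) := by
    intro c' z hz
    rw [cInt]
    calc _ ≤ ‖∫ x in Icc (-r) 0, Complex.exp (z * (x:ℂ)) ∂μp‖ +
            ‖∫ x in Icc (-r) 0, Complex.exp (z * (x:ℂ)) ∂μn‖ := norm_sub_le _ _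
      _ ≤ Real.exp (|c'| * r) * Mp + Real.exp (|c'| * r) * Mn :=
          add_le_add (expIntAux_bound hr μp hz) (expIntAux_bound hr μn hz)
      _ = Real.exp (|c'| * r) * (Mp + Mn) := by ring
  -- the characteristic function is not identically zero
  have hne : ∃ w : ℂ, hChar r θ a w ≠ 0 := by
    set x : ℝ := |θ| * (Mp + Mn) + 1
    have hx1 : (0:ℝ) < x := by positivity
    refine ⟨(x : ℂ), ?_⟩
    intro hzero
    rw [hChar, sub_eq_zero] at hzero
    have hb := hcInt_bound 0 (x : ℂ) (by simp [hx1.le])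
    simp only [abs_zero, zero_mul, Real.exp_zero, one_mul] at hb
    have : ‖(x:ℂ)‖ ≤ |θ| * (Mp + Mn) := by
      rw [hzero, norm_mul, Complex.norm_real, Real.norm_eq_abs]
      exact mul_le_mul_of_nonneg_left hb (abs_nonneg θ)
    rw [Complex.norm_real, Real.norm_eq_abs, abs_of_pos hx1] at this
    simp only [x] at this
    linarith
  -- zeros with Re ≥ c are in a compact ball
  set R : ℝ := |θ| * (Real.exp (|c| * r) * (Mp + Mn))
  have hsub : {l : ℂ | hChar r θ a l = 0 ∧ c ≤ l.re} ⊆ Metric.closedBall 0 R := by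
    rintro z ⟨hz0, hzre⟩
    rw [hChar, sub_eq_zero] at hz0
    rw [Metric.mem_closedBall, dist_zero_right, hz0, norm_mul, Complex.norm_real,
      Real.norm_eq_abs]
    exact mul_le_mul_of_nonneg_left (hcInt_bound c z hzre) (abs_nonneg θ)
  -- conclude by the identity theorem
  by_contra hinf
  rw [← Set.not_infinite, not_not] at hinf
  obtain ⟨z₀, _, hacc⟩ :=
    hinf.exists_accPt_of_subset_isCompact (isCompact_closedBall (0:ℂ) R) hsub
  have hfreq : ∃ᶠ z in nhdsWithin z₀ {z₀}ᶜ, hChar r θ a z = 0 := by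
    rw [accPt_iff_frequently] at hacc
    rw [nhdsWithin, frequently_inf_principal]
    apply hacc.mono
    rintro z ⟨hne', hz⟩
    exact ⟨hne', hz.1⟩
  have := hanal.eqOn_zero_of_preconnected_of_frequently_eq_zero
    isPreconnected_univ (mem_univ z₀) hfreq
  obtain ⟨w, hw⟩ := hne
  exact hw (this (mem_univ w))
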